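/- There exists an increasing, convex, differentiable function φ : [0,∞) → [0,∞) with φ(0) ≥ 1, and a strictly increasing sequence (t_k) of positive reals with t_k → ∞, such that φ'(t_k) > e^{φ(t_k)} for every k. -/

import Mathlib

open MeasureTheory Filter Set Topology

noncomputable def qq (x : ℝ) : ℝ := max x 0 ^ 2 / 2

lemma qq_nonneg (x : ℝ) : 0 ≤ qq x := by unfold qq; positivity

lemma hasDerivAt_qq (x : ℝ) : HasDerivAt qq (max x 0) x := by
  rcases lt_trichotomy x 0 with hx | hx | hx
  · have h : qq =ᶠ[𝓝 x] fun _ => (0:ℝ) := by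
      filter_upwards [Iio_mem_nhds hx] with y hy
      simp [qq, max_eq_right (le_of_lt (mem_Iio.1 hy))]
    rw [max_eq_right hx.le]
    exact (hasDerivAt_const x (0:ℝ)).congr_of_eventuallyEq h
  · subst hx
    rw [hasDerivAt_iff_isLittleO]
    have h0 : qq 0 = 0 := by simp [qq]
    refine Asymptotics.isLittleO_iff.2 fun c hc => ?_
    filter_upwards [Metric.ball_mem_nhds (0:ℝ) (by positivity : (0:ℝ) < 2*c)] with y hy
    rw [Metric.mem_ball, dist_zero_right] at hy
    have h1 : max y 0 ≤ ‖y‖ := max_le (le_abs_self y) (norm_nonneg y)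
    have h2 : 0 ≤ max y 0 := le_max_right y 0
    have h3 : qq y ≤ ‖y‖^2/2 := by
      unfold qq; nlinarith
    have h4 : ‖qq y - qq 0 - (y - 0) • max (0:ℝ) 0‖ = qq y := by
      simp [h0, abs_of_nonneg (qq_nonneg y)]
    rw [h4]
    have : ‖y‖^2/2 ≤ c * ‖y - 0‖ := by
      rw [sub_zero]
      nlinarith [norm_nonneg y]
    linarith
  · have h : qq =ᶠ[𝓝 x] fun y => y^2/2 := by
      filter_upwards [Ioi_mem_nhds hx] with y hy
      simp [qq, max_eq_left (le_of_lt (mem_Ioi.1 hy))]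
    rw [max_eq_left hx.le]
    have : HasDerivAt (fun y : ℝ => y^2/2) (2 * x ^ 1 / 2) x := (hasDerivAt_pow 2 x).div_const 2
    simpa using this.congr_of_eventuallyEq h

noncomputable def psi (x : ℝ) : ℝ := qq x - qq (x - 1)

noncomputable def clamp (x : ℝ) : ℝ := max x 0 - max (x - 1) 0

lemma hasDerivAt_psi (x : ℝ) : HasDerivAt psi (clamp x) x := by
  have h1 : HasDerivAt (fun y : ℝ => qq (y - 1)) (max (x-1) 0) x := by
    exact ((hasDerivAt_qq (x-1)).comp x ((hasDerivAt_id x).sub_const 1)).congr_deriv (mul_one _)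
  exact (hasDerivAt_qq x).sub h1

lemma clamp_nonneg (x : ℝ) : 0 ≤ clamp x := by
  have : max (x-1) 0 ≤ max x 0 := max_le_max (by linarith) le_rfl
  unfold clamp; linarith

lemma clamp_le_one (x : ℝ) : clamp x ≤ 1 := by
  have h1 : x - 1 ≤ max (x-1) 0 := le_max_left _ _
  have h2 : (0:ℝ) ≤ max (x-1) 0 := le_max_right _ _
  have : max x 0 ≤ 1 + max (x-1) 0 := max_le (by linarith) (by linarith)
  unfold clamp; linarith

lemma clamp_eq (x : ℝ) : clamp x = min (max x 0) 1 := by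
  unfold clamp
  rcases le_total x 1 with h | h
  · rw [max_eq_right (by linarith : x - 1 ≤ 0), min_eq_left (max_le h zero_le_one)]
    ring
  · rw [max_eq_left (by linarith : (0:ℝ) ≤ x - 1),
      max_eq_left (by linarith : (0:ℝ) ≤ x), min_eq_right h]
    ring

lemma clamp_mono : Monotone clamp := by
  have : Monotone fun x : ℝ => min (max x 0) 1 :=
    (monotone_id.max monotone_const).min monotone_const
  simpa [funext clamp_eq] using this

lemma clamp_one : clamp 1 = 1 := by norm_num [clamp]

lemma psi_nonpos {x : ℝ} (hx : x ≤ 0) : psi x = 0 := by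
  simp [psi, qq, max_eq_right hx, max_eq_right (by linarith : x - 1 ≤ 0)]

lemma psi_nonneg (x : ℝ) : 0 ≤ psi x := by
  have h1 : max (x-1) 0 ≤ max x 0 := max_le_max (by linarith) le_rfl
  have h2 : (0:ℝ) ≤ max (x-1) 0 := le_max_right _ _
  unfold psi qq
  nlinarith

lemma psi_one : psi 1 = 1/2 := by norm_num [psi, qq]

lemma psi_le (x : ℝ) : psi x ≤ max x 0 := by
  have h1 : max (x-1) 0 ≤ max x 0 := max_le_max (by linarith) le_rfl
  have h2 : (0:ℝ) ≤ max (x-1) 0 := le_max_right _ _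
  have h3 : max x 0 - max (x-1) 0 ≤ 1 := clamp_le_one x
  unfold psi qq
  nlinarith

lemma psi_differentiable : Differentiable ℝ psi := fun x => (hasDerivAt_psi x).differentiableAt

lemma deriv_psi : deriv psi = clamp := funext fun x => (hasDerivAt_psi x).deriv

lemma psi_mono : Monotone psi := by
  have := monotone_of_deriv_nonneg psi_differentiable (by rw [deriv_psi]; exact clamp_nonneg)
  exact this

lemma convexOn_psi : ConvexOn ℝ univ psi := by
  refine MonotoneOn.convexOn_of_deriv convex_univ
    psi_differentiable.continuous.continuousOn
    (psi_differentiable.differentiableOn) ?_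
  rw [interior_univ, deriv_psi]
  exact clamp_mono.monotoneOn _

noncomputable def SS : ℕ → ℝ
  | 0 => 0
  | (k+1) => SS k + (Real.exp (3 + (k:ℝ) + ((k:ℝ)+1) * SS k) + 1)

noncomputable def VV (k : ℕ) : ℝ := Real.exp (3 + (k:ℝ) + ((k:ℝ)+1) * SS k) + 1

lemma one_lt_VV (k : ℕ) : 1 < VV k := by
  have := Real.exp_pos (3 + (k:ℝ) + ((k:ℝ)+1) * SS k)
  unfold VV; linarith

lemma VV_pos (k : ℕ) : 0 < VV k := lt_trans one_pos (one_lt_VV k)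

lemma SS_succ (k : ℕ) : SS (k+1) = SS k + VV k := rfl

lemma SS_eq (k : ℕ) : SS k = ∑ j ∈ Finset.range k, VV j := by
  induction k with
  | zero => simp [SS]
  | succ n ih => rw [SS_succ, Finset.sum_range_succ, ih]

noncomputable def phi (t : ℝ) : ℝ := 1 + t + ∑' k, psi (VV k * (t - k))

noncomputable def Phi (N : ℕ) (t : ℝ) : ℝ :=
  1 + t + ∑ k ∈ Finset.range N, psi (VV k * (t - k))

lemma term_eq_zero {t : ℝ} {k : ℕ} (h : t ≤ k) : psi (VV k * (t - k)) = 0 :=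
  psi_nonpos (by nlinarith [VV_pos k])

lemma phi_eq {N : ℕ} {t : ℝ} (ht : t < N) : phi t = Phi N t := by
  unfold phi Phi
  congr 1
  refine tsum_eq_sum fun k hk => term_eq_zero ?_
  have : (N:ℝ) ≤ k := by exact_mod_cast Nat.le_of_not_lt (fun h => hk (Finset.mem_range.2 h))
  linarith

lemma hasDerivAt_Phi (N : ℕ) (t : ℝ) :
    HasDerivAt (Phi N) (1 + ∑ k ∈ Finset.range N, VV k * clamp (VV k * (t - k))) t := by
  have h1 : ∀ k ∈ Finset.range N,
      HasDerivAt (fun t : ℝ => psi (VV k * (t - (k:ℝ)))) (VV k * clamp (VV k * (t - k))) t := by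
    intro k _
    have hinner : HasDerivAt (fun t : ℝ => VV k * (t - (k:ℝ))) (VV k) t := by
      simpa using ((hasDerivAt_id t).sub_const (k:ℝ)).const_mul (VV k)
    exact ((hasDerivAt_psi (VV k * (t - k))).comp t hinner).congr_deriv (mul_comm _ _)
  have h2 := HasDerivAt.fun_sum h1
  have h3 : HasDerivAt (fun t : ℝ => 1 + t) 1 t := (hasDerivAt_id t).const_add 1
  exact h3.add h2

lemma phi_eventuallyEq (N : ℕ) {t : ℝ} (ht : t < N) : phi =ᶠ[𝓝 t] Phi N := by
  filter_upwards [Iio_mem_nhds ht] with y hy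
  exact phi_eq (mem_Iio.1 hy)

lemma hasDerivAt_phi {t : ℝ} (N : ℕ) (ht : t < N) :
    HasDerivAt phi (1 + ∑ k ∈ Finset.range N, VV k * clamp (VV k * (t - k))) t :=
  (hasDerivAt_Phi N t).congr_of_eventuallyEq (phi_eventuallyEq N ht)

lemma Phi_mono (N : ℕ) : Monotone (Phi N) := by
  intro a b hab
  unfold Phi
  have : ∀ k ∈ Finset.range N, psi (VV k * (a - k)) ≤ psi (VV k * (b - k)) := fun k _ =>
    psi_mono (mul_le_mul_of_nonneg_left (by linarith) (VV_pos k).le)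
  have hsum := Finset.sum_le_sum this
  linarith

lemma Phi_convex (N : ℕ) : ConvexOn ℝ univ (Phi N) := by
  have hbase : ConvexOn ℝ univ (fun t : ℝ => 1 + t) := by
    refine ⟨convex_univ, fun x _ y _ a b ha hb hab => le_of_eq ?_⟩
    simp only [smul_eq_mul]
    linear_combination (-1 : ℝ) * hab
  have hterm : ∀ k : ℕ, ConvexOn ℝ univ (fun t : ℝ => psi (VV k * (t - (k:ℝ)))) := by
    intro k
    refine ⟨convex_univ, fun x _ y _ a b ha hb hab => ?_⟩
    have h := convexOn_psi.2 (mem_univ (VV k * (x - k))) (mem_univ (VV k * (y - k))) ha hb hab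
    simp only [smul_eq_mul] at h ⊢
    have harg : VV k * ((a * x + b * y) - k) = a * (VV k * (x - k)) + b * (VV k * (y - k)) := by
      linear_combination (VV k * (k:ℝ)) * hab
    rw [harg]
    exact h
  have hsum : ∀ M : ℕ, ConvexOn ℝ univ (fun t : ℝ => ∑ k ∈ Finset.range M, psi (VV k * (t - k))) := by
    intro M
    induction M with
    | zero => simpa using convexOn_const (0:ℝ) convex_univ
    | succ n ih =>
      have h := ih.add (hterm n)
      have he : (fun t : ℝ => ∑ k ∈ Finset.range (n+1), psi (VV k * (t - k))) = (fun t : ℝ => ∑ k ∈ Finset.range n, psi (VV k * (t - k))) + fun t : ℝ => psi (VV n * (t - n)) := by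
        ext t; simp [Finset.sum_range_succ]
      rw [he]; exact h
  have h := hbase.add (hsum N)
  have he : Phi N = (fun t : ℝ => 1 + t) + fun t : ℝ => ∑ k ∈ Finset.range N, psi (VV k * (t - k)) := by
    ext t; simp [Phi, add_assoc]
  rw [he]; exact h

noncomputable def tt (k : ℕ) : ℝ := (k:ℝ) + 1 / VV k

lemma inv_VV_lt_one (k : ℕ) : 1 / VV k < 1 := (div_lt_one (VV_pos k)).2 (one_lt_VV k)

lemma inv_VV_pos (k : ℕ) : 0 < 1 / VV k := div_pos one_pos (VV_pos k)

lemma tt_pos (k : ℕ) : 0 < tt k := by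
  have h1 := inv_VV_pos k
  have h2 : (0:ℝ) ≤ k := Nat.cast_nonneg k
  unfold tt; linarith

lemma tt_lt (k : ℕ) : tt k < ((k+1 : ℕ) : ℝ) := by
  have := inv_VV_lt_one k
  unfold tt; push_cast; linarith

lemma phi_bound (k : ℕ) : phi (tt k) ≤ 3 + (k:ℝ) + ((k:ℝ)+1) * SS k := by
  have harg : VV k * (tt k - (k:ℝ)) = 1 := by
    unfold tt
    field_simp
    rw [show (k:ℝ) + 1 / VV k - k = 1 / VV k by ring, mul_one_div_cancel (VV_pos k).ne']
  have h1 : phi (tt k) = Phi (k+1) (tt k) := phi_eq (tt_lt k)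
  rw [h1]
  unfold Phi
  rw [Finset.sum_range_succ, harg, psi_one]
  have hterm : ∀ j ∈ Finset.range k, psi (VV j * (tt k - j)) ≤ VV j * ((k:ℝ)+1) := by
    intro j hj
    have hj' : (0:ℝ) ≤ j := Nat.cast_nonneg j
    have htt : tt k ≤ (k:ℝ) + 1 := by
      have := tt_lt k; push_cast at this; linarith
    refine le_trans (psi_le _) (max_le ?_ ?_)
    · exact mul_le_mul_of_nonneg_left (by linarith) (VV_pos j).le
    · exact mul_nonneg (VV_pos j).le (by positivity)
  have hsum : ∑ j ∈ Finset.range k, psi (VV j * (tt k - j)) ≤ ((k:ℝ)+1) * SS k := by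
    calc ∑ j ∈ Finset.range k, psi (VV j * (tt k - j))
        ≤ ∑ j ∈ Finset.range k, VV j * ((k:ℝ)+1) := Finset.sum_le_sum hterm
      _ = (∑ j ∈ Finset.range k, VV j) * ((k:ℝ)+1) := by rw [Finset.sum_mul]
      _ = ((k:ℝ)+1) * SS k := by rw [← SS_eq, mul_comm]
  have htt2 : tt k ≤ (k:ℝ) + 1 := by
    have := tt_lt k; push_cast at this; linarith
  linarith

theorem stmt4 :
    ∃ φ : ℝ → ℝ,
      MonotoneOn φ (Set.Ici 0) ∧
      ConvexOn ℝ (Set.Ici 0) φ ∧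
      DifferentiableOn ℝ φ (Set.Ici 0) ∧
      (∀ t ∈ Set.Ici (0 : ℝ), 0 ≤ φ t) ∧
      1 ≤ φ 0 ∧
      ∃ t : ℕ → ℝ,
        StrictMono t ∧ (∀ k, 0 < t k) ∧ Filter.Tendsto t Filter.atTop Filter.atTop ∧
        ∀ k, Real.exp (φ (t k)) < derivWithin φ (Set.Ici 0) (t k) := by
  refine ⟨phi, ?_, ?_, ?_, ?_, ?_, tt, ?_, tt_pos, ?_, ?_⟩
  · -- MonotoneOn
    intro x _ y _ hxy
    obtain ⟨N, hN⟩ := exists_nat_gt y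
    rw [phi_eq (lt_of_le_of_lt hxy hN), phi_eq hN]
    exact Phi_mono N hxy
  · -- ConvexOn
    refine ⟨convex_Ici 0, fun x hx y hy a b ha hb hab => ?_⟩
    obtain ⟨N, hN⟩ := exists_nat_gt (max x y)
    have hxN : x < N := lt_of_le_of_lt (le_max_left x y) hN
    have hyN : y < N := lt_of_le_of_lt (le_max_right x y) hN
    have hcomb : a • x + b • y < N := by
      simp only [smul_eq_mul]
      nlinarith [le_max_left x y, le_max_right x y]
    rw [phi_eq hxN, phi_eq hyN, phi_eq hcomb]
    exact (Phi_convex N).2 (mem_univ x) (mem_univ y) ha hb hab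
  · -- DifferentiableOn
    intro x _
    obtain ⟨N, hN⟩ := exists_nat_gt x
    exact ((hasDerivAt_phi N hN).differentiableAt).differentiableWithinAt
  · -- nonneg
    intro u hu
    have h := tsum_nonneg (L := SummationFilter.unconditional ℕ) (fun k => psi_nonneg (VV k * (u - k)))
    have : (0:ℝ) ≤ u := hu
    unfold phi; linarith
  · -- phi 0 ≥ 1
    have h := tsum_nonneg (L := SummationFilter.unconditional ℕ) (fun k => psi_nonneg (VV k * ((0:ℝ) - k)))
    unfold phi; linarith
  · -- StrictMono
    refine strictMono_nat_of_lt_succ fun k => ?_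
    have h1 := inv_VV_lt_one k
    have h2 := inv_VV_pos (k+1)
    unfold tt; push_cast; linarith
  · -- Tendsto
    refine tendsto_atTop_mono (fun k => ?_) tendsto_natCast_atTop_atTop
    have := inv_VV_pos k
    unfold tt; linarith
  · -- main inequality
    intro k
    have htN : tt k < ((k+1 : ℕ) : ℝ) := tt_lt k
    have hD := hasDerivAt_phi (k+1) htN
    have hdw : derivWithin phi (Set.Ici 0) (tt k) =
        1 + ∑ j ∈ Finset.range (k+1), VV j * clamp (VV j * (tt k - j)) := by
      rw [hD.differentiableAt.derivWithin (uniqueDiffOn_Ici 0 _ (mem_Ici.2 (tt_pos k).le))]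
      exact hD.deriv
    rw [hdw]
    have harg : VV k * (tt k - (k:ℝ)) = 1 := by
      unfold tt; field_simp
      rw [show (k:ℝ) + 1 / VV k - k = 1 / VV k by ring, mul_one_div_cancel (VV_pos k).ne']
    have hsingle : VV k ≤ ∑ j ∈ Finset.range (k+1), VV j * clamp (VV j * (tt k - j)) := by
      have hmem : k ∈ Finset.range (k+1) := Finset.self_mem_range_succ k
      have hterm : VV k * clamp (VV k * (tt k - (k:ℝ))) = VV k := by
        rw [harg, clamp_one, mul_one]
      have hf : ∀ j ∈ Finset.range (k+1), 0 ≤ VV j * clamp (VV j * (tt k - (j:ℝ))) :=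
        fun j _ => mul_nonneg (VV_pos j).le (clamp_nonneg _)
      have hs := Finset.single_le_sum hf hmem
      rw [hterm] at hs
      exact hs
    have hexp : Real.exp (phi (tt k)) ≤ Real.exp (3 + (k:ℝ) + ((k:ℝ)+1) * SS k) :=
      Real.exp_le_exp.2 (phi_bound k)
    have hV : Real.exp (3 + (k:ℝ) + ((k:ℝ)+1) * SS k) < VV k := by
      unfold VV; linarith
    linarith
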